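/- arXiv:2511.00763 — 4 statements merged into one kernel-verified Lean document; each statement's English description precedes it below -/
import Mathlib

section
/- Let β₀ > 0, α > 1, k ≥ 2 an integer, and θ ∈ (0,1]. Define the logarithmic gain Δ(N,k) = log θ + β₀·N·(α^(N−1) − α^(N/k − 1)). If the real number N satisfies N ≥ 1 + (1/log α)·( log(1 − 2·log θ / β₀) + (log 2)/(1 − 1/k) ), then Δ(N,k) > 0; equivalently, θ·exp(−β₀·N·α^(N/k − 1)) > exp(−β₀·N·α^(N−1)). -/
set_option maxHeartbeats 1000000


/-- Advantage of divide-and-conquer: if `N` exceeds the bound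
`1 + (1/log α)·(log(1 - 2 log θ / β₀) + log 2 / (1 - 1/k))`, then the logarithmic gain
`Δ(N,k) = log θ + β₀·N·(α^(N−1) − α^(N/k−1))` is positive; equivalently
`SAR_DC(N,k) = θ·exp(−β₀·N·α^(N/k−1)) > exp(−β₀·N·α^(N−1)) = SAR(N)`. -/
theorem divide_and_conquer_gain (β₀ α θ : ℝ) (hβ₀ : 0 < β₀) (hα : 1 < α)
    (k : ℕ) (hk : 2 ≤ k) (hθ0 : 0 < θ) (hθ1 : θ ≤ 1) (N : ℝ)
    (hN : N ≥ 1 + (1 / Real.log α) *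
      (Real.log (1 - 2 * Real.log θ / β₀) + Real.log 2 / (1 - 1 / (k : ℝ)))) :
    Real.log θ + β₀ * N * (α ^ (N - 1) - α ^ (N / (k : ℝ) - 1)) > 0 ∧
    θ * Real.exp (-(β₀ * N * α ^ (N / (k : ℝ) - 1))) >
      Real.exp (-(β₀ * N * α ^ (N - 1))) := by
  have hα0 : (0:ℝ) < α := by linarith
  have hL : 0 < Real.log α := Real.log_pos hα
  have hk2 : (2:ℝ) ≤ (k:ℝ) := by exact_mod_cast hk
  have hk0 : (0:ℝ) < (k:ℝ) := by linarith
  have hkq : 1 - 1/(k:ℝ) ≥ 1/2 := by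
    have h1 : 1/(k:ℝ) ≤ 1/2 := by
      rw [div_le_div_iff₀ hk0 (by norm_num)]; linarith
    linarith
  have hkq0 : (0:ℝ) < 1 - 1/(k:ℝ) := by linarith
  have hlogθ : Real.log θ ≤ 0 := Real.log_nonpos hθ0.le hθ1
  have hA1 : (1:ℝ) ≤ 1 - 2 * Real.log θ / β₀ := by
    have : 2 * Real.log θ / β₀ ≤ 0 := div_nonpos_of_nonpos_of_nonneg (by linarith) hβ₀.le
    linarith
  have hA0 : (0:ℝ) < 1 - 2 * Real.log θ / β₀ := by linarith
  have hlogA : 0 ≤ Real.log (1 - 2 * Real.log θ / β₀) := Real.log_nonneg hA1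
  have hlog2 : 0 < Real.log 2 := Real.log_pos (by norm_num)
  have hterm : 0 < Real.log 2 / (1 - 1/(k:ℝ)) := div_pos hlog2 hkq0
  have hC0 : 0 < Real.log (1 - 2 * Real.log θ / β₀) + Real.log 2 / (1 - 1/(k:ℝ)) := by
    linarith
  have hN1 : Real.log (1 - 2 * Real.log θ / β₀) + Real.log 2 / (1 - 1/(k:ℝ))
      ≤ (N - 1) * Real.log α := by
    have h1 : (1 / Real.log α) *
        (Real.log (1 - 2 * Real.log θ / β₀) + Real.log 2 / (1 - 1/(k:ℝ))) ≤ N - 1 := by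
      linarith [hN]
    have h2 := mul_le_mul_of_nonneg_right h1 hL.le
    have h3 : (1 / Real.log α) *
        (Real.log (1 - 2 * Real.log θ / β₀) + Real.log 2 / (1 - 1/(k:ℝ))) * Real.log α
        = Real.log (1 - 2 * Real.log θ / β₀) + Real.log 2 / (1 - 1/(k:ℝ)) := by
      field_simp
    linarith [h2, h3]
  have hNgt1 : 1 < N := by
    have h4 : 0 < (1 / Real.log α) *
        (Real.log (1 - 2 * Real.log θ / β₀) + Real.log 2 / (1 - 1/(k:ℝ))) :=
      mul_pos (by positivity) hC0
    linarith [hN]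
  have e1 : α ^ (N - 1) = Real.exp (Real.log α * (N - 1)) := Real.rpow_def_of_pos hα0 _
  have e2 : α ^ (N/(k:ℝ) - 1) = Real.exp (Real.log α * (N/(k:ℝ) - 1)) :=
    Real.rpow_def_of_pos hα0 _
  -- Key 1 : α^(N-1) ≥ 1 - 2 log θ / β₀
  have key1 : 1 - 2 * Real.log θ / β₀ ≤ α ^ (N - 1) := by
    have h1 : Real.log (1 - 2 * Real.log θ / β₀) ≤ Real.log α * (N - 1) := by
      nlinarith [hN1, hterm]
    calc 1 - 2 * Real.log θ / β₀ = Real.exp (Real.log (1 - 2 * Real.log θ / β₀)) :=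
          (Real.exp_log hA0).symm
      _ ≤ Real.exp (Real.log α * (N - 1)) := Real.exp_le_exp.mpr h1
      _ = α ^ (N - 1) := e1.symm
  -- Key 2 : α^(N/k-1) ≤ α^(N-1) / 2
  have key2 : α ^ (N/(k:ℝ) - 1) ≤ α ^ (N - 1) / 2 := by
    have hmul : Real.log 2 ≤ (N - 1) * Real.log α * (1 - 1/(k:ℝ)) := by
      have h1 : Real.log 2 / (1 - 1/(k:ℝ)) ≤ (N - 1) * Real.log α := by linarith
      have := (div_le_iff₀ hkq0).mp h1
      linarith
    have hmul2 : Real.log 2 ≤ N * Real.log α * (1 - 1/(k:ℝ)) := by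
      have h0 : 0 ≤ Real.log α * (1 - 1/(k:ℝ)) := by positivity
      nlinarith
    have hexp : Real.log α * (N/(k:ℝ) - 1) ≤ Real.log α * (N - 1) - Real.log 2 := by
      have hid : Real.log α * (N - 1) - Real.log α * (N/(k:ℝ) - 1)
          = N * Real.log α * (1 - 1/(k:ℝ)) := by
        field_simp; ring
      linarith
    calc α ^ (N/(k:ℝ) - 1) = Real.exp (Real.log α * (N/(k:ℝ) - 1)) := e2
      _ ≤ Real.exp (Real.log α * (N - 1) - Real.log 2) := Real.exp_le_exp.mpr hexp
      _ = Real.exp (Real.log α * (N - 1)) / Real.exp (Real.log 2) := Real.exp_sub _ _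
      _ = α ^ (N - 1) / 2 := by rw [Real.exp_log (by norm_num : (0:ℝ) < 2), e1]
  have hb0 : 0 < α ^ (N/(k:ℝ) - 1) := Real.rpow_pos_of_pos hα0 _
  -- Main positivity of Δ
  have hΔ : Real.log θ + β₀ * N * (α ^ (N - 1) - α ^ (N/(k:ℝ) - 1)) > 0 := by
    have hdiff : (1 - 2 * Real.log θ / β₀) / 2 ≤ α ^ (N - 1) - α ^ (N/(k:ℝ) - 1) := by
      linarith
    have hpos : 0 < (1 - 2 * Real.log θ / β₀) / 2 := by positivity
    have hstep : (β₀ * N) * ((1 - 2 * Real.log θ / β₀) / 2) ≤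
        (β₀ * N) * (α ^ (N - 1) - α ^ (N/(k:ℝ) - 1)) :=
      mul_le_mul_of_nonneg_left hdiff (by positivity)
    have h1 : β₀ * ((1 - 2 * Real.log θ / β₀) / 2) ≤
        β₀ * N * (α ^ (N - 1) - α ^ (N/(k:ℝ) - 1)) := by
      nlinarith [mul_nonneg (mul_nonneg hβ₀.le (by linarith : (0:ℝ) ≤ N - 1)) hpos.le]
    have h2 : β₀ * ((1 - 2 * Real.log θ / β₀) / 2) = β₀ / 2 - Real.log θ := by
      field_simp
    linarith
  refine ⟨hΔ, ?_⟩
  have hexpand : β₀ * N * (α ^ (N - 1) - α ^ (N/(k:ℝ) - 1))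
      = β₀ * N * α ^ (N - 1) - β₀ * N * α ^ (N/(k:ℝ) - 1) := by ring
  have harg : -(β₀ * N * α ^ (N - 1)) < Real.log θ + -(β₀ * N * α ^ (N/(k:ℝ) - 1)) := by
    linarith [hΔ, hexpand]
  have hlt : Real.exp (-(β₀ * N * α ^ (N - 1))) <
      Real.exp (Real.log θ + -(β₀ * N * α ^ (N/(k:ℝ) - 1))) := Real.exp_lt_exp.mpr harg
  calc Real.exp (-(β₀ * N * α ^ (N - 1)))
      < Real.exp (Real.log θ + -(β₀ * N * α ^ (N/(k:ℝ) - 1))) := hlt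
    _ = θ * Real.exp (-(β₀ * N * α ^ (N/(k:ℝ) - 1))) := by
        rw [Real.exp_add, Real.exp_log hθ0]
end

section
/- Let β₀ > 0, α > 1, k ≥ 2 an integer, θ ∈ (0,1], and let N be a real number such that (i) N > 1, (ii) 1 − α^(N/k − N) > 1/2, and (iii) (1/2)·β₀·α^(N−1) > −log θ. Then log θ + β₀·N·(α^(N−1) − α^(N/k − 1)) > 0. -/
/-- If `β₀ > 0`, `α > 1`, `k ≥ 2`, `θ ∈ (0,1]`, and the real number `N` satisfies
(i) `N > 1`, (ii) `1 − α^(N/k−N) > 1/2`, (iii) `(1/2)·β₀·α^(N−1) > −log θ`,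
then the logarithmic gain `log θ + β₀·N·(α^(N−1) − α^(N/k−1))` is positive. -/
theorem gain_pos_of_three_bounds (β₀ α θ : ℝ) (hβ₀ : 0 < β₀) (hα : 1 < α)
    (k : ℕ) (hk : 2 ≤ k) (hθ0 : 0 < θ) (hθ1 : θ ≤ 1) (N : ℝ)
    (h1 : N > 1)
    (h2 : 1 - α ^ (N / (k : ℝ) - N) > 1 / 2)
    (h3 : (1 / 2) * β₀ * α ^ (N - 1) > -Real.log θ) :
    Real.log θ + β₀ * N * (α ^ (N - 1) - α ^ (N / (k : ℝ) - 1)) > 0 := by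
  have hα0 : 0 < α := lt_trans one_pos hα
  have hsplit : α ^ (N / (k : ℝ) - 1) = α ^ (N - 1) * α ^ (N / (k : ℝ) - N) := by
    rw [← Real.rpow_add hα0]; ring_nf
  have hP : 0 < α ^ (N - 1) := Real.rpow_pos_of_pos hα0 _
  have key : α ^ (N - 1) - α ^ (N / (k : ℝ) - 1)
      = α ^ (N - 1) * (1 - α ^ (N / (k : ℝ) - N)) := by
    rw [hsplit]; ring
  have h4 : α ^ (N - 1) - α ^ (N / (k : ℝ) - 1) > α ^ (N - 1) * (1 / 2) := by
    rw [key]; exact (mul_lt_mul_iff_right₀ hP).2 h2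
  have h5 : β₀ * N * (α ^ (N - 1) - α ^ (N / (k : ℝ) - 1))
      > β₀ * 1 * (α ^ (N - 1) * (1 / 2)) := by
    have hβN : β₀ * 1 < β₀ * N := by nlinarith
    have h6 : 0 < α ^ (N - 1) * (1 / 2) := by positivity
    nlinarith [mul_pos hβ₀ (lt_trans one_pos h1)]
  nlinarith
end

section
/- Let p_σ, p_φ ∈ [0,1] and let N be a positive natural number. Suppose the per-site Pauli-multiplication outcomes and the per-site phase errors are all mutually independent: each of the N sites is multiplied correctly with probability 1 − p_σ, and each phase error ε_i ∈ ℤ/4ℤ satisfies P(ε_i = 0) = 1 − p_φ and P(ε_i = g) = p_φ/3 for each nonzero g. Then the probability that all N sites are multiplied correctly and simultaneously ε₁ + ⋯ + ε_N = 0 equals (1 − p_σ)^N · ( 1/4 + (3/4)·((3 − 4p_φ)/3)^N ). -/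
open MeasureTheory ProbabilityTheory
open scoped ENNReal



lemma sar_wsum (p : ℝ) : ∑ g : ZMod 4, (if g = 0 then 1 - p else p / 3) = 1 := by
  have h : ∀ g : ZMod 4, (if g = 0 then 1 - p else p / 3)
      = p / 3 + (if g = 0 then 1 - p - p / 3 else 0) := by
    intro g; by_cases h : g = 0 <;> simp [h] <;> ring
  rw [Finset.sum_congr rfl fun g _ => h g, Finset.sum_add_distrib, Finset.sum_const,
    Finset.sum_ite_eq' Finset.univ (0 : ZMod 4) (fun _ => 1 - p - p / 3)]
  simp [Finset.card_univ, ZMod.card 4]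
  ring

lemma sar_sum_aux (p : ℝ) (n : ℕ) : ∀ g : ZMod 4,
    (∑ x ∈ Finset.univ.filter (fun x : Fin n → ZMod 4 => ∑ i, x i = g),
      ∏ i, (if x i = 0 then 1 - p else p / 3))
    = 1/4 + (if g = 0 then (3:ℝ)/4 else -(1/4)) * ((3 - 4*p)/3)^n := by
  induction n with
  | zero =>
    intro g
    rw [Finset.sum_filter]
    rw [Fintype.sum_unique]
    by_cases hg : g = 0 <;> simp [hg, eq_comm] <;> norm_num
  | succ n ih =>
    intro g
    rw [Finset.sum_filter]
    rw [← Equiv.sum_comp (Fin.consEquiv (fun _ : Fin (n+1) => ZMod 4))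
      (fun x => if ∑ i, x i = g then ∏ i, (if x i = 0 then 1 - p else p / 3) else 0)]
    rw [Fintype.sum_prod_type]
    have hterm : ∀ (a : ZMod 4) (y : Fin n → ZMod 4),
        (if ∑ i, (Fin.consEquiv (fun _ : Fin (n+1) => ZMod 4)) (a, y) i = g
          then ∏ i, (if (Fin.consEquiv (fun _ : Fin (n+1) => ZMod 4)) (a, y) i = 0
            then 1 - p else p / 3) else 0)
        = (if a = 0 then 1 - p else p / 3) *
            (if ∑ i, y i = g - a then ∏ i, (if y i = 0 then 1 - p else p / 3) else 0) := by
      intro a y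
      have h1 : (Fin.consEquiv (fun _ : Fin (n+1) => ZMod 4)) (a, y) = Fin.cons a y := rfl
      rw [h1, Fin.sum_univ_succ, Fin.prod_univ_succ]
      simp only [Fin.cons_zero, Fin.cons_succ]
      have hcond : (a + ∑ i : Fin n, y i = g) ↔ (∑ i : Fin n, y i = g - a) := by
        constructor
        · intro h; rw [← h]; ring
        · intro h; rw [h]; ring
      by_cases hc : ∑ i : Fin n, y i = g - a
      · rw [if_pos (hcond.mpr hc), if_pos hc]
      · rw [if_neg (fun h => hc (hcond.mp h)), if_neg hc, mul_zero]
    rw [Finset.sum_congr rfl fun a _ => Finset.sum_congr rfl fun y _ => hterm a y]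
    have hinner : ∀ a : ZMod 4,
        ∑ y : Fin n → ZMod 4, (if a = 0 then 1 - p else p / 3) *
          (if ∑ i, y i = g - a then ∏ i, (if y i = 0 then 1 - p else p / 3) else 0)
        = (if a = 0 then 1 - p else p / 3) *
          (1/4 + (if a = g then (3:ℝ)/4 else -(1/4)) * ((3 - 4*p)/3)^n) := by
      intro a
      rw [← Finset.mul_sum, ← Finset.sum_filter, ih (g - a)]
      have hif : (if g - a = 0 then (3:ℝ)/4 else -(1/4)) = (if a = g then (3:ℝ)/4 else -(1/4)) := by
        by_cases hag : a = g
        · rw [if_pos hag, if_pos (by rw [hag, sub_self])]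
        · rw [if_neg hag, if_neg (fun h => hag (sub_eq_zero.mp h).symm)]
      rw [hif]
    rw [Finset.sum_congr rfl fun a _ => hinner a]
    have hsplit : ∀ a : ZMod 4,
        (if a = 0 then 1 - p else p / 3) *
          (1/4 + (if a = g then (3:ℝ)/4 else -(1/4)) * ((3 - 4*p)/3)^n)
        = (if a = 0 then 1 - p else p / 3) * (1/4 - ((3 - 4*p)/3)^n/4)
          + (if a = g then (if a = 0 then 1 - p else p / 3) * ((3 - 4*p)/3)^n else 0) := by
      intro a
      by_cases hag : a = g
      · rw [if_pos hag, if_pos hag]; ring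
      · rw [if_neg hag, if_neg hag]; ring
    rw [Finset.sum_congr rfl fun a _ => hsplit a, Finset.sum_add_distrib,
      ← Finset.sum_mul, sar_wsum,
      Finset.sum_ite_eq' Finset.univ g (fun a => (if a = 0 then 1 - p else p / 3) * ((3 - 4*p)/3)^n)]
    by_cases hg : g = 0 <;> simp [hg] <;> ring


/-- From a finite cover with total (outer) measure at most 1, each set admits a measurable
hull that agrees with it a.e. -/
lemma sar_hull {Ω : Type*} [MeasurableSpace Ω] (μ : Measure Ω) [IsProbabilityMeasure μ]
    {κ : Type*} [Fintype κ] (A : κ → Set Ω)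
    (hcover : ∀ ω, ∃ k, ω ∈ A k)
    (hsum : ∑ k, μ (A k) ≤ 1) :
    ∀ k, ∃ H, MeasurableSet H ∧ A k =ᵐ[μ] H := by
  intro k
  classical
  set H : κ → Set Ω := fun j => toMeasurable μ (A j) with hH
  have hsub : ∀ j, A j ⊆ H j := fun j => subset_toMeasurable μ (A j)
  have hmeas : ∀ j, MeasurableSet (H j) := fun j => measurableSet_toMeasurable μ (A j)
  have hμH : ∀ j, μ (H j) = μ (A j) := fun j => measure_toMeasurable (A j)
  set K : Set Ω := ⋃ j ∈ Finset.univ.erase k, H j with hK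
  have hKmeas : MeasurableSet K := Finset.measurableSet_biUnion _ (fun j _ => hmeas j)
  have hUnion : μ (H k ∪ K) = 1 := by
    have huniv : H k ∪ K = Set.univ := by
      apply Set.eq_univ_of_forall
      intro ω
      obtain ⟨j, hj⟩ := hcover ω
      by_cases hjk : j = k
      · exact Or.inl (hsub k (hjk ▸ hj))
      · refine Or.inr ?_
        rw [hK]
        exact Set.mem_biUnion (Finset.mem_erase.mpr ⟨hjk, Finset.mem_univ j⟩) (hsub j hj)
    rw [huniv]; exact measure_univ
  have hsum2 : μ (H k) + μ K ≤ 1 := by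
    calc μ (H k) + μ K ≤ μ (H k) + ∑ j ∈ Finset.univ.erase k, μ (H j) :=
          add_le_add le_rfl (measure_biUnion_finset_le _ _)
    _ = ∑ j, μ (H j) := Finset.add_sum_erase Finset.univ (fun j => μ (H j)) (Finset.mem_univ k)
    _ = ∑ j, μ (A j) := by simp only [hμH]
    _ ≤ 1 := hsum
  have hnull : μ (H k ∩ K) = 0 := by
    have h3 : μ (H k ∪ K) + μ (H k ∩ K) = μ (H k) + μ K := measure_union_add_inter (H k) hKmeas
    rw [hUnion] at h3
    have : (1 : ℝ≥0∞) + μ (H k ∩ K) ≤ 1 + 0 := by rw [add_zero, h3]; exact hsum2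
    exact le_antisymm (ENNReal.le_of_add_le_add_left ENNReal.one_ne_top this) zero_le
  have hdiff : μ (H k \ A k) = 0 := by
    refine measure_mono_null ?_ hnull
    intro ω hω
    obtain ⟨j, hj⟩ := hcover ω
    have hjk : j ≠ k := fun h => hω.2 (h ▸ hj)
    exact ⟨hω.1, by rw [hK]; exact Set.mem_biUnion (Finset.mem_erase.mpr ⟨hjk, Finset.mem_univ j⟩) (hsub j hj)⟩
  refine ⟨H k, hmeas k, ae_eq_set.mpr ⟨?_, hdiff⟩⟩
  rw [Set.diff_eq_empty.mpr (hsub k)]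
  exact measure_empty

/-- Additivity of outer measure along a finite a.e.-measurable disjoint partition. -/
lemma sar_partition {Ω : Type*} [MeasurableSpace Ω] (μ : Measure Ω)
    {κ : Type*} (s : Finset κ) :
    ∀ (A : κ → Set Ω), (∀ k ∈ s, ∃ H, MeasurableSet H ∧ A k =ᵐ[μ] H) →
    (∀ k ∈ s, ∀ l ∈ s, k ≠ l → Disjoint (A k) (A l)) →
    ∀ T : Set Ω, T ⊆ ⋃ k ∈ s, A k → μ T = ∑ k ∈ s, μ (T ∩ A k) := by
  classical
  induction s using Finset.induction with
  | empty =>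
    intro A _ _ T hT
    simp only [Finset.notMem_empty, Set.iUnion_of_empty, Set.iUnion_empty] at hT
    have hTe : T = ∅ := Set.subset_empty_iff.mp hT
    rw [hTe]
    simp
  | @insert a s ha ih =>
    intro A hA hdisj T hT
    obtain ⟨H, hHmeas, hae⟩ := hA a (Finset.mem_insert_self a s)
    have e1 : (T ∩ A a : Set Ω) =ᵐ[μ] (T ∩ H : Set Ω) := ae_eq_set_inter (ae_eq_refl T) hae
    have e2 : (T \ A a : Set Ω) =ᵐ[μ] (T \ H : Set Ω) := by
      have := ae_eq_set_inter (ae_eq_refl T) (ae_eq_set_compl_compl.mpr hae)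
      rw [Set.diff_eq, Set.diff_eq]; exact this
    have hstep : μ T = μ (T ∩ A a) + μ (T \ A a) := by
      rw [measure_congr e1, measure_congr e2, add_comm]
      exact (measure_diff_add_inter T hHmeas).symm
    have hTsub : (T \ A a : Set Ω) ⊆ ⋃ k ∈ s, A k := by
      intro ω hω
      have := hT hω.1
      simp only [Set.mem_iUnion, Finset.mem_insert] at this ⊢
      obtain ⟨k, hk, hωk⟩ := this
      rcases hk with rfl | hk
      · exact absurd hωk hω.2
      · exact ⟨k, hk, hωk⟩
    have hrec := ih A (fun k hk => hA k (Finset.mem_insert_of_mem hk))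
      (fun k hk l hl hkl => hdisj k (Finset.mem_insert_of_mem hk) l (Finset.mem_insert_of_mem hl) hkl)
      (T \ A a) hTsub
    have hterm : ∀ k ∈ s, ((T \ A a : Set Ω) ∩ A k) = T ∩ A k := by
      intro k hk
      ext ω
      constructor
      · rintro ⟨⟨h1, _⟩, h2⟩; exact ⟨h1, h2⟩
      · rintro ⟨h1, h2⟩
        refine ⟨⟨h1, fun hωa => ?_⟩, h2⟩
        have hka : k ≠ a := fun h => ha (h ▸ hk)
        exact (Set.disjoint_left.mp (hdisj k (Finset.mem_insert_of_mem hk) a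
          (Finset.mem_insert_self a s) hka)) h2 hωa
    rw [Finset.sum_insert ha, hstep, hrec, Finset.sum_congr rfl (fun k hk => by rw [hterm k hk])]


/-- SAR of the Pauli-string task: if the `N` per-site multiplication outcomes
`X i : Ω → Bool` (correct with probability `1 − p_σ`) and the `N` per-site phase errors
`ε i : Ω → ℤ/4ℤ` (with `P(ε = 0) = 1 − p_φ`, `P(ε = g) = p_φ/3` for `g ≠ 0`) are all
mutually independent, then the probability that all sites are multiplied correctly and
the phase errors sum to zero equals `(1−p_σ)^N·(1/4 + (3/4)·((3−4p_φ)/3)^N)`. -/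
theorem pauli_string_SAR {Ω : Type*} [MeasurableSpace Ω]
    (μ : Measure Ω) [IsProbabilityMeasure μ]
    (pσ pφ : ℝ) (hpσ0 : 0 ≤ pσ) (hpσ1 : pσ ≤ 1) (hpφ0 : 0 ≤ pφ) (hpφ1 : pφ ≤ 1)
    (N : ℕ) (hN : 0 < N)
    (X : Fin N → Ω → Bool) (ε : Fin N → Ω → ZMod 4)
    (hindep : iIndepFun
      (m := fun j : Fin N ⊕ Fin N =>
        (Sum.rec (motive := fun j => MeasurableSpace (Sum.elim (fun _ => Bool) (fun _ => ZMod 4) j))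
          (fun _ => (⊤ : MeasurableSpace Bool)) (fun _ => (⊤ : MeasurableSpace (ZMod 4))) j))
      (fun j : Fin N ⊕ Fin N =>
        (Sum.rec (motive := fun j => Ω → Sum.elim (fun _ => Bool) (fun _ => ZMod 4) j)
          (fun i => X i) (fun i => ε i) j)) μ)
    (hX : ∀ i, (μ {ω | X i ω = true}).toReal = 1 - pσ)
    (h0 : ∀ i, (μ {ω | ε i ω = 0}).toReal = 1 - pφ)
    (hg : ∀ i, ∀ g : ZMod 4, g ≠ 0 → (μ {ω | ε i ω = g}).toReal = pφ / 3) :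
    (μ {ω | (∀ i, X i ω = true) ∧ ∑ i, ε i ω = 0}).toReal =
      (1 - pσ) ^ N * (1 / 4 + 3 / 4 * ((3 - 4 * pφ) / 3) ^ N) := by
  classical
  have hWnn : ∀ g : ZMod 4, 0 ≤ (if g = 0 then 1 - pφ else pφ / 3) := by
    intro g; by_cases h : g = 0 <;> simp [h] <;> linarith
  have hε : ∀ i (g : ZMod 4), μ (ε i ⁻¹' {g}) = ENNReal.ofReal (if g = 0 then 1 - pφ else pφ / 3) := by
    intro i g
    have hne := measure_ne_top μ (ε i ⁻¹' {g})
    have hpre : (ε i ⁻¹' {g}) = {ω | ε i ω = g} := rfl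
    by_cases h : g = 0
    · subst h; rw [← ENNReal.ofReal_toReal hne, hpre, h0 i]; simp
    · rw [← ENNReal.ofReal_toReal hne, hpre, hg i g h, if_neg h]
  have hXm : ∀ i, μ (X i ⁻¹' {true}) = ENNReal.ofReal (1 - pσ) := by
    intro i
    have hne := measure_ne_top μ (X i ⁻¹' {true})
    have hpre : (X i ⁻¹' {true}) = {ω | X i ω = true} := rfl
    rw [← ENNReal.ofReal_toReal hne, hpre, hX i]
  -- key independence computation
  have key : ∀ (B : Fin N → Set Bool) (C : Fin N → Set (ZMod 4)),
      μ ((⋂ i, X i ⁻¹' B i) ∩ ⋂ i, ε i ⁻¹' C i)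
        = (∏ i, μ (X i ⁻¹' B i)) * ∏ i, μ (ε i ⁻¹' C i) := by
    intro B C
    have h := hindep.measure_inter_preimage_eq_mul (S := Finset.univ)
      (sets := fun j => Sum.rec
        (motive := fun j => Set (Sum.elim (fun _ => Bool) (fun _ => ZMod 4) j))
        (fun i => B i) (fun i => C i) j)
      (fun j _ => by cases j <;> exact MeasurableSpace.measurableSet_top)
    have hset : (⋂ j ∈ (Finset.univ : Finset (Fin N ⊕ Fin N)),
        (Sum.rec (motive := fun j => Ω → Sum.elim (fun _ => Bool) (fun _ => ZMod 4) j)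
          (fun i => X i) (fun i => ε i) j) ⁻¹'
          (Sum.rec (motive := fun j => Set (Sum.elim (fun _ => Bool) (fun _ => ZMod 4) j))
            (fun i => B i) (fun i => C i) j))
        = (⋂ i, X i ⁻¹' B i) ∩ ⋂ i, ε i ⁻¹' C i := by
      ext ω
      simp only [Set.mem_iInter, Finset.mem_univ, Set.mem_inter_iff, forall_const]
      constructor
      · intro hw; exact ⟨fun i => hw (Sum.inl i), fun i => hw (Sum.inr i)⟩
      · rintro ⟨h1, h2⟩ j
        cases j with
        | inl i => exact h1 i
        | inr i => exact h2 i
    rw [hset] at h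
    rw [h, Fintype.prod_sum_type]
    rfl
  -- atoms
  set Atom : (Fin N → ZMod 4) → Set Ω := fun x => ⋂ i, ε i ⁻¹' {x i} with hAtom
  have hμinter : ∀ x : Fin N → ZMod 4,
      μ ((⋂ i, X i ⁻¹' {true}) ∩ Atom x)
        = ENNReal.ofReal ((1 - pσ) ^ N * ∏ i, (if x i = 0 then 1 - pφ else pφ / 3)) := by
    intro x
    rw [hAtom]
    rw [key (fun _ => {true}) (fun i => {x i})]
    have h1 : (∏ i : Fin N, μ (X i ⁻¹' {true})) = ENNReal.ofReal ((1 - pσ) ^ N) := by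
      simp only [hXm]
      rw [Finset.prod_const, Finset.card_univ, Fintype.card_fin,
        ← ENNReal.ofReal_pow (by linarith)]
    have h2 : (∏ i : Fin N, μ (ε i ⁻¹' {x i}))
        = ENNReal.ofReal (∏ i, (if x i = 0 then 1 - pφ else pφ / 3)) := by
      simp only [hε]
      rw [← ENNReal.ofReal_prod_of_nonneg (fun i _ => hWnn (x i))]
    rw [h1, h2, ← ENNReal.ofReal_mul (pow_nonneg (by linarith) N)]
  have hμAtom : ∀ x : Fin N → ZMod 4,
      μ (Atom x) = ENNReal.ofReal (∏ i, (if x i = 0 then 1 - pφ else pφ / 3)) := by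
    intro x
    have := key (fun _ => Set.univ) (fun i => {x i})
    simp only [Set.preimage_univ, Set.iInter_univ, Set.univ_inter, measure_univ,
      Finset.prod_const_one, one_mul] at this
    rw [hAtom, this]
    simp only [hε]
    rw [← ENNReal.ofReal_prod_of_nonneg (fun i _ => hWnn (x i))]
  -- a.e.-measurability of the atoms
  have hcover : ∀ ω, ∃ x : Fin N → ZMod 4, ω ∈ Atom x := by
    intro ω
    exact ⟨fun i => ε i ω, Set.mem_iInter.mpr fun i => rfl⟩
  have hsum : ∑ x : Fin N → ZMod 4, μ (Atom x) ≤ 1 := by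
    have hval : ∑ x : Fin N → ZMod 4, μ (Atom x)
        = ENNReal.ofReal (∑ x : Fin N → ZMod 4, ∏ i, (if x i = 0 then 1 - pφ else pφ / 3)) := by
      simp only [hμAtom]
      rw [← ENNReal.ofReal_sum_of_nonneg (fun x _ => Finset.prod_nonneg (fun i _ => hWnn (x i)))]
    have hone : ∑ x : Fin N → ZMod 4, ∏ i, (if x i = 0 then 1 - pφ else pφ / 3) = 1 := by
      have := Finset.prod_univ_sum (fun _ : Fin N => (Finset.univ : Finset (ZMod 4)))
        (fun _ g => (if g = 0 then 1 - pφ else pφ / 3))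
      rw [Fintype.piFinset_univ] at this
      rw [← this, sar_wsum pφ, Finset.prod_const_one]
    rw [hval, hone]
    simp
  have hhull := sar_hull μ Atom hcover hsum
  -- the partition computation
  set F : Finset (Fin N → ZMod 4) :=
    Finset.univ.filter (fun x : Fin N → ZMod 4 => ∑ i, x i = 0) with hF
  set E : Set Ω := {ω | (∀ i, X i ω = true) ∧ ∑ i, ε i ω = 0} with hE
  have hEsub : E ⊆ ⋃ x ∈ F, Atom x := by
    intro ω hω
    refine Set.mem_biUnion (x := fun i => ε i ω) ?_ (Set.mem_iInter.mpr fun i => rfl)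
    rw [hF]
    exact Finset.mem_filter.mpr ⟨Finset.mem_univ _, hω.2⟩
  have hdisj : ∀ x ∈ F, ∀ y ∈ F, x ≠ y → Disjoint (Atom x) (Atom y) := by
    intro x _ y _ hxy
    rw [Set.disjoint_left]
    intro ω hωx hωy
    apply hxy
    funext i
    have h1 : ε i ω = x i := Set.mem_iInter.mp hωx i
    have h2 : ε i ω = y i := Set.mem_iInter.mp hωy i
    rw [← h1, h2]
  have hpart := sar_partition μ F Atom (fun x _ => hhull x) hdisj E hEsub
  have hterm : ∀ x ∈ F, (E ∩ Atom x : Set Ω) = (⋂ i, X i ⁻¹' {true}) ∩ Atom x := by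
    intro x hx
    have hxsum : ∑ i, x i = 0 := (Finset.mem_filter.mp hx).2
    ext ω
    simp only [Set.mem_inter_iff, hE, hAtom, Set.mem_setOf_eq, Set.mem_iInter, Set.mem_preimage,
      Set.mem_singleton_iff]
    constructor
    · rintro ⟨⟨h1, _⟩, h2⟩; exact ⟨h1, h2⟩
    · rintro ⟨h1, h2⟩
      refine ⟨⟨h1, ?_⟩, h2⟩
      have : ∀ i, ε i ω = x i := h2
      rw [Finset.sum_congr rfl (fun i _ => this i)]
      exact hxsum
  have hμE : μ E = ENNReal.ofReal
      (∑ x ∈ F, (1 - pσ) ^ N * ∏ i, (if x i = 0 then 1 - pφ else pφ / 3)) := by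
    rw [hpart, Finset.sum_congr rfl (fun x hx => by rw [hterm x hx, hμinter x]),
      ← ENNReal.ofReal_sum_of_nonneg]
    intro x _
    exact mul_nonneg (pow_nonneg (by linarith) N) (Finset.prod_nonneg fun i _ => hWnn (x i))
  rw [hμE, ENNReal.toReal_ofReal (Finset.sum_nonneg (fun x _ =>
      mul_nonneg (pow_nonneg (by linarith) N) (Finset.prod_nonneg fun i _ => hWnn (x i)))),
    ← Finset.mul_sum]
  congr 1
  have := sar_sum_aux pφ N 0
  norm_num at this
  rw [hF, this]
end

section
/- Let N, n be natural numbers and h a real number, and let m = tanh h. Equip {−1,+1}^{{1,…,N}×{1,…,n}} with the product Gibbs measure with weight proportional to exp( h·∑_{i,a} s_i^a ). Then the second moment of the plaquette sum satisfies E[ ( ∑_{1≤i<j≤N} ∑_{1≤a<b≤n} s_i^a s_j^a s_i^b s_j^b )² ] = N·(N−1)·n·(n−1)·[ 1/4 + (1/2)·(N + n − 4)·m⁴ + (N−2)·(n−2)·m⁶ + (1/4)·( (1/4)·N·(N−1)·n·(n−1) − (2N−3)·(2n−3) )·m⁸ ]. -/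
/-- The spin values `{−1, +1}` as a subtype of `ℤ`. -/
abbrev Spin : Type := ({-1, 1} : Finset ℤ)

/-- The real value of a spin. -/
def spinVal (x : Spin) : ℝ := (x : ℤ)

/-- The Gibbs weight `exp(h·∑_{i,a} sᵢᵃ)` of a replicated configuration. -/
noncomputable def gibbsWeight (h : ℝ) (N n : ℕ) (s : Fin N → Fin n → Spin) : ℝ :=
  Real.exp (h * ∑ i : Fin N, ∑ a : Fin n, spinVal (s i a))

/-- The plaquette sum `∑_{i<j} ∑_{a<b} sᵢᵃ sⱼᵃ sᵢᵇ sⱼᵇ`. -/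
def plaquetteSum (N n : ℕ) (s : Fin N → Fin n → Spin) : ℝ :=
  ∑ i : Fin N, ∑ j ∈ Finset.Ioi i, ∑ a : Fin n, ∑ b ∈ Finset.Ioi a,
    spinVal (s i a) * spinVal (s j a) * spinVal (s i b) * spinVal (s j b)



open Finset


lemma spin_sq (x : Spin) : spinVal x * spinVal x = 1 := by
  rcases Finset.mem_insert.1 x.2 with h | h
  · simp [spinVal, h]
  · simp [spinVal, Finset.mem_singleton.1 h]

lemma sum_spin (F : ℤ → ℝ) : ∑ x : Spin, F ↑x = F (-1) + F 1 := by
  rw [Finset.univ_eq_attach, Finset.sum_attach _ F]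
  rw [Finset.sum_pair (by norm_num : (-1 : ℤ) ≠ 1)]

lemma sum_spin_Z (h : ℝ) : ∑ x : Spin, Real.exp (h * spinVal x) = Real.exp h + Real.exp (-h) := by
  have := sum_spin (fun z => Real.exp (h * (z : ℝ)))
  simp only [spinVal] at *
  rw [this]; push_cast; rw [mul_neg_one, mul_one]; ring

lemma sum_spin_M (h : ℝ) : ∑ x : Spin, Real.exp (h * spinVal x) * spinVal x
    = Real.exp h - Real.exp (-h) := by
  have := sum_spin (fun z => Real.exp (h * (z : ℝ)) * (z : ℝ))
  simp only [spinVal] at *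
  rw [this]; push_cast; rw [mul_neg_one, mul_one]; ring

lemma sum_fun_prod {ι : Type*} [Fintype ι] [DecidableEq ι] (g : ι → Spin → ℝ) :
    ∑ f : ι → Spin, ∏ i, g i (f i) = ∏ i, ∑ x : Spin, g i x := by
  rw [← Finset.sum_prod_piFinset Finset.univ g, Fintype.piFinset_univ]

lemma moment {ι : Type*} [Fintype ι] [DecidableEq ι] (h : ℝ) (S : Finset ι) :
    ∑ f : ι → Spin, (∏ i, Real.exp (h * spinVal (f i))) * (∏ i ∈ S, spinVal (f i))
      = (Real.exp h - Real.exp (-h)) ^ S.card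
        * (Real.exp h + Real.exp (-h)) ^ (Fintype.card ι - S.card) := by
  have key : ∀ f : ι → Spin,
      (∏ i, Real.exp (h * spinVal (f i))) * (∏ i ∈ S, spinVal (f i))
        = ∏ i, (Real.exp (h * spinVal (f i)) * (if i ∈ S then spinVal (f i) else 1)) := by
    intro f
    rw [Finset.prod_mul_distrib]
    congr 1
    rw [Finset.prod_ite_mem, Finset.univ_inter]
  simp_rw [key]
  rw [sum_fun_prod (fun i x => Real.exp (h * spinVal x) * if i ∈ S then spinVal x else 1)]
  have step : ∀ i : ι, (∑ x : Spin, Real.exp (h * spinVal x) * (if i ∈ S then spinVal x else 1))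
      = if i ∈ S then Real.exp h - Real.exp (-h) else Real.exp h + Real.exp (-h) := by
    intro i
    by_cases hi : i ∈ S
    · simp only [hi, if_true]; exact sum_spin_M h
    · simp only [hi, if_false, mul_one]; exact sum_spin_Z h
  simp_rw [step]
  rw [← Finset.prod_filter_mul_prod_filter_not Finset.univ (· ∈ S)]
  have h1 : Finset.univ.filter (· ∈ S) = S := by ext x; simp
  have h2 : Finset.univ.filter (fun i => ¬ i ∈ S) = Sᶜ := by ext x; simp
  rw [h1, h2, Finset.prod_congr rfl (fun x hx => if_pos hx),
    Finset.prod_congr rfl (fun x hx => if_neg (Finset.mem_compl.1 hx)),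
    Finset.prod_const, Finset.prod_const, Finset.card_compl]

lemma prod_sd {ι : Type*} [DecidableEq ι] (f : ι → Spin) (S T : Finset ι) :
    (∏ c ∈ S, spinVal (f c)) * (∏ c ∈ T, spinVal (f c))
      = ∏ c ∈ (S \ T) ∪ (T \ S), spinVal (f c) := by
  have hS : S = S \ T ∪ S ∩ T := (sdiff_union_inter S T).symm
  have hT : T = T \ S ∪ T ∩ S := (sdiff_union_inter T S).symm
  have e1 : (∏ c ∈ S, spinVal (f c)) = (∏ c ∈ S \ T, spinVal (f c)) * ∏ c ∈ S ∩ T, spinVal (f c) := by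
    rw [← Finset.prod_union (disjoint_sdiff_inter S T), sdiff_union_inter]
  have e2 : (∏ c ∈ T, spinVal (f c)) = (∏ c ∈ T \ S, spinVal (f c)) * ∏ c ∈ T ∩ S, spinVal (f c) := by
    rw [← Finset.prod_union (disjoint_sdiff_inter T S), sdiff_union_inter]
  rw [Finset.prod_union disjoint_sdiff_sdiff, e1, e2]
  have : (∏ c ∈ S ∩ T, spinVal (f c)) * (∏ c ∈ T ∩ S, spinVal (f c)) = 1 := by
    rw [inter_comm T S, ← Finset.prod_mul_distrib]
    exact Finset.prod_eq_one fun c _ => spin_sq (f c)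
  calc ((∏ c ∈ S \ T, spinVal (f c)) * ∏ c ∈ S ∩ T, spinVal (f c)) *
        ((∏ c ∈ T \ S, spinVal (f c)) * ∏ c ∈ T ∩ S, spinVal (f c))
      = ((∏ c ∈ S \ T, spinVal (f c)) * ∏ c ∈ T \ S, spinVal (f c)) *
        ((∏ c ∈ S ∩ T, spinVal (f c)) * ∏ c ∈ T ∩ S, spinVal (f c)) := by ring
    _ = _ := by rw [this, mul_one]

lemma plaq_prod {N n : ℕ} (f : Fin N × Fin n → Spin) {i j : Fin N} {a b : Fin n}
    (hij : i ≠ j) (hab : a ≠ b) :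
    spinVal (f (i, a)) * spinVal (f (j, a)) * spinVal (f (i, b)) * spinVal (f (j, b))
      = ∏ c ∈ ({i, j} ×ˢ {a, b} : Finset (Fin N × Fin n)), spinVal (f c) := by
  rw [Finset.prod_product, Finset.prod_pair hij, Finset.prod_pair hab, Finset.prod_pair hab]
  ring

lemma card_sd {ι : Type*} [DecidableEq ι] {S T : Finset ι} :
    ((S \ T) ∪ (T \ S)).card = (S.card - (S ∩ T).card) + (T.card - (T ∩ S).card) := by
  have h1 := Finset.card_sdiff_add_card_inter S T
  have h2 := Finset.card_sdiff_add_card_inter T S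
  rw [Finset.card_union_of_disjoint disjoint_sdiff_sdiff]
  omega



-- swap i<j sums
lemma sum_Ioi_comm {M : ℕ} (f : Fin M → Fin M → ℝ) :
    ∑ i : Fin M, ∑ j ∈ Ioi i, f i j = ∑ j : Fin M, ∑ i ∈ Iio j, f i j := by
  rw [Finset.sum_comm' (s := Finset.univ) (t := fun i => Ioi i)
    (t' := Finset.univ) (s' := fun j => Iio j)]
  intro i j
  simp [mem_Ioi, mem_Iio]

lemma card_Ioi_Iio {M : ℕ} (i : Fin M) :
    ((Ioi i).card : ℝ) + ((Iio i).card : ℝ) = (M : ℝ) - 1 := by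
  have h1 : (Ioi i).card = M - 1 - (i : ℕ) := Fin.card_Ioi i
  have h2 : (Iio i).card = (i : ℕ) := Fin.card_Iio i
  have hi : (i : ℕ) < M := i.2
  rw [h1, h2, Nat.cast_sub (by omega), Nat.cast_sub (by omega)]
  push_cast; ring

-- Gauss
lemma sum_card_Iio {M : ℕ} : ∑ i : Fin M, ((Iio i).card : ℝ) = (M : ℝ) * ((M : ℝ) - 1) / 2 := by
  simp only [Fin.card_Iio]
  rw [Fin.sum_univ_eq_sum_range (fun k => ((k : ℕ) : ℝ))]
  have h := Finset.sum_range_id_mul_two M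
  have : ((∑ i ∈ Finset.range M, i) : ℝ) * 2 = (M : ℝ) * ((M:ℝ) - 1) := by
    rcases Nat.eq_zero_or_pos M with hM | hM
    · subst hM; simp
    · have hc := congrArg (fun k : ℕ => (k : ℝ)) h
      simp only [Nat.cast_mul, Nat.cast_sum, Nat.cast_ofNat] at hc
      rw [hc, Nat.cast_sub hM]; norm_num
  push_cast at this ⊢
  linarith

lemma sum_card_Ioi {M : ℕ} : ∑ i : Fin M, ((Ioi i).card : ℝ) = (M : ℝ) * ((M : ℝ) - 1) / 2 := by
  have := sum_card_Iio (M := M)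
  have h2 : ∑ i : Fin M, (((Ioi i).card : ℝ) + ((Iio i).card : ℝ)) = (M:ℝ) * ((M:ℝ) - 1) := by
    rw [Finset.sum_congr rfl (fun i _ => card_Ioi_Iio i), Finset.sum_const,
      Finset.card_univ, Fintype.card_fin, nsmul_eq_mul]
  rw [Finset.sum_add_distrib] at h2
  linarith

lemma pair_inter_le {α : Type*} [DecidableEq α] (i j k l : α) :
    (({i, j} ∩ {k, l} : Finset α)).card ≤ 2 := by
  calc (({i, j} ∩ {k, l} : Finset α)).card ≤ ({i, j} : Finset α).card :=
        Finset.card_le_card inter_subset_left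
    _ ≤ 2 := Finset.card_insert_le _ _ |>.trans (by simp)

lemma card_pair_inter {α : Type*} [DecidableEq α] {i j k l : α} (hij : i ≠ j) (hkl : k ≠ l) :
    ((({i, j} ∩ {k, l} : Finset α)).card : ℝ)
      = (if i = k then (1:ℝ) else 0) + (if i = l then 1 else 0)
        + (if j = k then 1 else 0) + (if j = l then 1 else 0) := by
  have single : ∀ x : α, ((({x} ∩ {k, l} : Finset α)).card : ℝ)
      = (if x = k then (1:ℝ) else 0) + (if x = l then 1 else 0) := by
    intro x
    by_cases h1 : x = k
    · subst h1; rw [Finset.singleton_inter_of_mem (by simp)]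
      simp [hkl]
    · by_cases h2 : x = l
      · subst h2; rw [Finset.singleton_inter_of_mem (by simp)]
        simp [h1]
      · rw [Finset.singleton_inter_of_notMem (by simp [h1, h2])]
        simp [h1, h2]
  have hsplit : ({i, j} ∩ {k, l} : Finset α) = ({i} ∩ {k, l}) ∪ ({j} ∩ {k, l}) := by
    rw [← Finset.union_inter_distrib_right]; rfl
  have hdisj : Disjoint (({i} : Finset α) ∩ {k, l}) (({j} : Finset α) ∩ {k, l}) := by
    apply Finset.disjoint_left.2
    intro x hx hy
    have h1 : x = i := Finset.mem_singleton.1 (Finset.mem_of_mem_inter_left hx)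
    have h2 : x = j := Finset.mem_singleton.1 (Finset.mem_of_mem_inter_left hy)
    exact hij (h1 ▸ h2)
  rw [hsplit, Finset.card_union_of_disjoint hdisj]
  push_cast
  rw [single i, single j]
  ring

lemma pair_inter_card_two {M : ℕ} {i j k l : Fin M} (hij : i < j) (hkl : k < l)
    (h2 : (({i, j} ∩ {k, l} : Finset (Fin M))).card = 2) : i = k ∧ j = l := by
  have hij' : i ≠ j := ne_of_lt hij
  have hcard : ({i, j} : Finset (Fin M)).card = 2 := Finset.card_pair hij'
  have heq : ({i, j} ∩ {k, l} : Finset (Fin M)) = {i, j} :=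
    Finset.eq_of_subset_of_card_le inter_subset_left (by rw [h2, hcard])
  have hsub2 : ({i, j} : Finset (Fin M)) ⊆ {k, l} := by
    rw [← heq]; exact inter_subset_right
  have hi : i = k ∨ i = l := by have := hsub2 (by simp : i ∈ ({i,j} : Finset (Fin M))); simpa using this
  have hj : j = k ∨ j = l := by have := hsub2 (by simp : j ∈ ({i,j} : Finset (Fin M))); simpa using this
  rcases hi with hi | hi <;> rcases hj with hj | hj
  · exact absurd (hi.trans hj.symm) hij'
  · exact ⟨hi, hj⟩
  · have hlt : j < i := by rw [hi, hj]; exact hkl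
    exact absurd (lt_trans hij hlt) (lt_irrefl _)
  · exact absurd (hi.trans hj.symm) hij'

lemma countT0 (M : ℕ) : ∑ i : Fin M, ∑ j ∈ Ioi i, ∑ k : Fin M, ∑ l ∈ Ioi k, (1:ℝ)
    = ((M:ℝ)*((M:ℝ)-1)/2)^2 := by
  have hinner : ∑ k : Fin M, ∑ l ∈ Ioi k, (1:ℝ) = (M:ℝ)*((M:ℝ)-1)/2 := by
    simp only [Finset.sum_const, nsmul_eq_mul, mul_one]
    exact sum_card_Ioi
  calc ∑ i : Fin M, ∑ j ∈ Ioi i, ∑ k : Fin M, ∑ l ∈ Ioi k, (1:ℝ)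
      = ∑ i : Fin M, ∑ j ∈ Ioi i, (M:ℝ)*((M:ℝ)-1)/2 :=
        Finset.sum_congr rfl fun i _ => Finset.sum_congr rfl fun j _ => hinner
    _ = ((M:ℝ)*((M:ℝ)-1)/2)^2 := by
        simp only [Finset.sum_const, nsmul_eq_mul]
        rw [← Finset.sum_mul, sum_card_Ioi]; ring

lemma e1 {M : ℕ} (i : Fin M) :
    ∑ k : Fin M, ∑ l ∈ Ioi k, (if i = k then (1:ℝ) else 0) = ((Ioi i).card : ℝ) := by
  have : ∀ k : Fin M, ∑ l ∈ Ioi k, (if i = k then (1:ℝ) else 0)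
      = (if i = k then ((Ioi k).card : ℝ) else 0) := by
    intro k; by_cases h : i = k <;> simp [h]
  rw [Finset.sum_congr rfl fun k _ => this k, Finset.sum_ite_eq]
  simp

lemma e2 {M : ℕ} (i : Fin M) :
    ∑ k : Fin M, ∑ l ∈ Ioi k, (if i = l then (1:ℝ) else 0) = ((Iio i).card : ℝ) := by
  have h1 : ∀ k : Fin M, ∑ l ∈ Ioi k, (if i = l then (1:ℝ) else 0)
      = if k < i then (1:ℝ) else 0 := by
    intro k
    rw [Finset.sum_ite_eq (Ioi k) i (fun _ => (1:ℝ))]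
    simp [Finset.mem_Ioi]
  rw [Finset.sum_congr rfl fun k _ => h1 k, Finset.sum_boole]
  congr 1
  apply Finset.card_nbij id (fun a ha => by simpa [Finset.mem_Iio] using ha)
    (fun a _ b _ hab => hab)
    (fun a ha => ⟨a, by simpa [Finset.mem_Iio] using ha, rfl⟩)

lemma countT1 (M : ℕ) : ∑ i : Fin M, ∑ j ∈ Ioi i, ∑ k : Fin M, ∑ l ∈ Ioi k,
    ((({i, j} ∩ {k, l} : Finset (Fin M))).card : ℝ) = (M:ℝ)*((M:ℝ)-1)^2 := by
  have key : ∀ i : Fin M, ∀ j ∈ Ioi i, ∑ k : Fin M, ∑ l ∈ Ioi k,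
      ((({i, j} ∩ {k, l} : Finset (Fin M))).card : ℝ) = 2*((M:ℝ)-1) := by
    intro i j hj
    have hij : i ≠ j := ne_of_lt (Finset.mem_Ioi.1 hj)
    have step : ∀ k : Fin M, ∀ l ∈ Ioi k,
        ((({i, j} ∩ {k, l} : Finset (Fin M))).card : ℝ)
          = (if i = k then (1:ℝ) else 0) + (if i = l then 1 else 0)
            + (if j = k then 1 else 0) + (if j = l then 1 else 0) :=
      fun k l hl => card_pair_inter hij (ne_of_lt (Finset.mem_Ioi.1 hl))
    rw [Finset.sum_congr rfl fun k _ => Finset.sum_congr rfl fun l hl => step k l hl]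
    simp only [Finset.sum_add_distrib]
    rw [e1 i, e2 i, e1 j, e2 j]
    have g1 := card_Ioi_Iio i
    have g2 := card_Ioi_Iio j
    linarith
  rw [Finset.sum_congr rfl fun i _ => Finset.sum_congr rfl fun j hj => key i j hj]
  simp only [Finset.sum_const, nsmul_eq_mul]
  rw [← Finset.sum_mul, sum_card_Ioi]
  ring

lemma countT2 (M : ℕ) : ∑ i : Fin M, ∑ j ∈ Ioi i, ∑ k : Fin M, ∑ l ∈ Ioi k,
    (((({i, j} ∩ {k, l} : Finset (Fin M))).card : ℝ)
      * ((((({i, j} ∩ {k, l} : Finset (Fin M))).card : ℝ)) - 1) / 2)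
    = (M:ℝ)*((M:ℝ)-1)/2 := by
  have hpt : ∀ (i j k l : Fin M), i < j → k < l →
      (((({i, j} ∩ {k, l} : Finset (Fin M))).card : ℝ)
        * ((((({i, j} ∩ {k, l} : Finset (Fin M))).card : ℝ)) - 1) / 2)
      = (if i = k then (1:ℝ) else 0) * (if j = l then 1 else 0) := by
    intro i j k l hij hkl
    set r := (({i, j} ∩ {k, l} : Finset (Fin M))).card with hr
    have hle : r ≤ 2 := pair_inter_le i j k l
    by_cases h2 : r = 2
    · obtain ⟨hik, hjl⟩ := pair_inter_card_two hij hkl h2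
      rw [h2, if_pos hik, if_pos hjl]; norm_num
    · have hne : ¬(i = k ∧ j = l) := by
        rintro ⟨rfl, rfl⟩
        apply h2
        rw [hr, Finset.inter_self, Finset.card_pair (ne_of_lt hij)]
      have hz : (if i = k then (1:ℝ) else 0) * (if j = l then 1 else 0) = 0 := by
        by_cases hik : i = k <;> by_cases hjl : j = l <;>
          simp [hik, hjl] at hne ⊢ <;> tauto
      rw [hz]
      have h01 : r = 0 ∨ r = 1 := by omega
      rcases h01 with h | h <;> rw [h] <;> norm_num
  rw [Finset.sum_congr rfl fun i _ => Finset.sum_congr rfl fun j hj =>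
    Finset.sum_congr rfl fun k _ => Finset.sum_congr rfl fun l hl =>
      hpt i j k l (Finset.mem_Ioi.1 hj) (Finset.mem_Ioi.1 hl)]
  have inner : ∀ (i j : Fin M), ∑ k : Fin M, ∑ l ∈ Ioi k,
      ((if i = k then (1:ℝ) else 0) * (if j = l then 1 else 0))
      = if j ∈ Ioi i then (1:ℝ) else 0 := by
    intro i j
    have h1 : ∀ k : Fin M, ∑ l ∈ Ioi k, ((if i = k then (1:ℝ) else 0) * (if j = l then 1 else 0))
        = if i = k then (if j ∈ Ioi k then (1:ℝ) else 0) else 0 := by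
      intro k
      by_cases h : i = k
      · simp only [h, if_true, one_mul]
        rw [Finset.sum_ite_eq (Ioi k) j (fun _ => (1:ℝ))]
      · simp [h]
    rw [Finset.sum_congr rfl fun k _ => h1 k, Finset.sum_ite_eq]
    simp
  rw [Finset.sum_congr rfl fun i _ => Finset.sum_congr rfl fun j hj => inner i j]
  have fin : ∀ i : Fin M, ∀ j ∈ Ioi i, (if j ∈ Ioi i then (1:ℝ) else 0) = 1 :=
    fun i j hj => if_pos hj
  rw [Finset.sum_congr rfl fun i _ => Finset.sum_congr rfl fun j hj => fin i j hj]
  simp only [Finset.sum_const, nsmul_eq_mul, mul_one]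
  exact sum_card_Ioi

lemma count (M : ℕ) (X : ℕ → ℝ) :
    ∑ i : Fin M, ∑ j ∈ Ioi i, ∑ k : Fin M, ∑ l ∈ Ioi k,
      X ((({i, j} ∩ {k, l} : Finset (Fin M))).card)
    = ((M:ℝ)*((M:ℝ)-1)/2)^2 * X 0 + (M:ℝ)*((M:ℝ)-1)^2 * (X 1 - X 0)
      + ((M:ℝ)*((M:ℝ)-1)/2) * (X 2 - 2*X 1 + X 0) := by
  have hpt : ∀ r : ℕ, r ≤ 2 → X r = X 0 * 1 + (X 1 - X 0) * (r:ℝ)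
      + (X 2 - 2*X 1 + X 0) * ((r:ℝ)*((r:ℝ)-1)/2) := by
    intro r hr; interval_cases r <;> push_cast <;> ring
  rw [Finset.sum_congr rfl fun i _ => Finset.sum_congr rfl fun j hj =>
    Finset.sum_congr rfl fun k _ => Finset.sum_congr rfl fun l hl =>
      hpt _ (pair_inter_le i j k l)]
  simp only [Finset.sum_add_distrib, ← Finset.mul_sum]
  rw [countT0, countT1, countT2]
  ring

lemma mul_expand {α : Type*} [Fintype α] (S : α → Finset α) (g1 g2 : α → α → ℝ) :
    (∑ a, ∑ b ∈ S a, g1 a b) * (∑ a, ∑ b ∈ S a, g2 a b)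
      = ∑ a, ∑ b ∈ S a, ∑ a', ∑ b' ∈ S a', g1 a b * g2 a' b' := by
  rw [Finset.sum_mul_sum]
  refine Finset.sum_congr rfl fun a _ => ?_
  calc ∑ a', (∑ b ∈ S a, g1 a b) * (∑ b' ∈ S a', g2 a' b')
      = ∑ a', ∑ b ∈ S a, ∑ b' ∈ S a', g1 a b * g2 a' b' := by
        refine Finset.sum_congr rfl fun a' _ => ?_
        rw [Finset.sum_mul_sum]
    _ = ∑ b ∈ S a, ∑ a', ∑ b' ∈ S a', g1 a b * g2 a' b' := Finset.sum_comm

lemma card_D {N n : ℕ} {i j k l : Fin N} {a b a' b' : Fin n}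
    (hij : i ≠ j) (hkl : k ≠ l) (hab : a ≠ b) (hab' : a' ≠ b') :
    ((({i, j} ×ˢ {a, b} : Finset (Fin N × Fin n)) \ ({k, l} ×ˢ {a', b'})
      ∪ ({k, l} ×ˢ {a', b'}) \ ({i, j} ×ˢ {a, b})).card)
    = 8 - 2 * ((({i, j} ∩ {k, l} : Finset (Fin N))).card
        * (({a, b} ∩ {a', b'} : Finset (Fin n))).card) := by
  have hr := pair_inter_le i j k l
  have hc := pair_inter_le a b a' b'
  simp only [card_sd, Finset.product_inter_product, Finset.card_product,
    Finset.card_pair hij, Finset.card_pair hkl, Finset.card_pair hab, Finset.card_pair hab']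
  rw [Finset.inter_comm ({k, l} : Finset (Fin N)) {i, j},
    Finset.inter_comm ({a', b'} : Finset (Fin n)) {a, b}]
  omega


/-- Under the product Gibbs measure with weight `∝ exp(h·∑_{i,a} sᵢᵃ)` on replicated
spin configurations, the second moment of the plaquette sum equals
`N(N−1)n(n−1)·[1/4 + (1/2)(N+n−4)m⁴ + (N−2)(n−2)m⁶ + (1/4)((1/4)N(N−1)n(n−1) − (2N−3)(2n−3))m⁸]`
with `m = tanh h`. -/
theorem plaquette_sum_second_moment (N n : ℕ) (h : ℝ) :
    (∑ s : Fin N → Fin n → Spin, gibbsWeight h N n s * plaquetteSum N n s ^ 2) /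
        (∑ s : Fin N → Fin n → Spin, gibbsWeight h N n s) =
      (N : ℝ) * (N - 1) * n * (n - 1) *
        (1 / 4 + (1 / 2) * ((N : ℝ) + n - 4) * Real.tanh h ^ 4 +
          ((N : ℝ) - 2) * ((n : ℝ) - 2) * Real.tanh h ^ 6 +
          (1 / 4) * ((1 / 4) * N * (N - 1) * n * (n - 1) -
            (2 * (N : ℝ) - 3) * (2 * (n : ℝ) - 3)) * Real.tanh h ^ 8) := by
  classical
  set m := Real.tanh h with hm
  set Z := Real.exp h + Real.exp (-h) with hZdef
  have hZpos : (0:ℝ) < Z := by positivity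
  have hMZ : Real.exp h - Real.exp (-h) = m * Z := by
    rw [hm, hZdef, Real.tanh_eq_sinh_div_cosh, Real.sinh_eq, Real.cosh_eq]
    have hne : Real.exp h + Real.exp (-h) ≠ 0 := by positivity
    field_simp
  have hpow : ∀ kk : ℕ, kk ≤ N * n →
      (Real.exp h - Real.exp (-h)) ^ kk * Z ^ (N * n - kk) = m ^ kk * Z ^ (N * n) := by
    intro kk hkk
    rw [hMZ, mul_pow, mul_assoc, ← pow_add]
    congr 2
    omega
  set e := Equiv.curry (Fin N) (Fin n) Spin with he
  have trans : ∀ G : (Fin N → Fin n → Spin) → ℝ,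
      ∑ s : Fin N → Fin n → Spin, G s = ∑ f : Fin N × Fin n → Spin, G (e f) :=
    fun G => (Equiv.sum_comp e G).symm
  rw [trans (fun s => gibbsWeight h N n s * plaquetteSum N n s ^ 2), trans (gibbsWeight h N n)]
  have hW : ∀ f : Fin N × Fin n → Spin,
      gibbsWeight h N n (e f) = ∏ c : Fin N × Fin n, Real.exp (h * spinVal (f c)) := by
    intro f
    show Real.exp (h * ∑ i : Fin N, ∑ a : Fin n, spinVal (f (i, a))) = _
    have h1 : (∑ c : Fin N × Fin n, spinVal (f c))
        = ∑ i : Fin N, ∑ a : Fin n, spinVal (f (i, a)) := Fintype.sum_prod_type (fun c => spinVal (f c))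
    rw [← h1, Finset.mul_sum, Real.exp_sum]
  have hcard : Fintype.card (Fin N × Fin n) = N * n := by
    rw [Fintype.card_prod, Fintype.card_fin, Fintype.card_fin]
  -- denominator
  have hden : ∑ f : Fin N × Fin n → Spin, gibbsWeight h N n (e f) = Z ^ (N * n) := by
    rw [Finset.sum_congr rfl fun f _ => hW f]
    have hmom := moment (ι := Fin N × Fin n) h ∅
    simp only [Finset.prod_empty, mul_one, Finset.card_empty, pow_zero, Nat.sub_zero, one_mul,
      hcard] at hmom
    rw [← hZdef] at hmom
    exact hmom
  -- plaquette sum as products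
  have hP : ∀ f : Fin N × Fin n → Spin, plaquetteSum N n (e f) =
      ∑ i : Fin N, ∑ j ∈ Ioi i, ∑ a : Fin n, ∑ b ∈ Ioi a,
        ∏ c ∈ ({i, j} ×ˢ {a, b} : Finset (Fin N × Fin n)), spinVal (f c) := by
    intro f
    refine Finset.sum_congr rfl fun i _ => Finset.sum_congr rfl fun j hj =>
      Finset.sum_congr rfl fun a _ => Finset.sum_congr rfl fun b hb => ?_
    exact plaq_prod f (ne_of_lt (Finset.mem_Ioi.1 hj)) (ne_of_lt (Finset.mem_Ioi.1 hb))
  -- numerator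
  have hnum : ∑ f : Fin N × Fin n → Spin, gibbsWeight h N n (e f) * plaquetteSum N n (e f) ^ 2
      = (∑ i : Fin N, ∑ j ∈ Ioi i, ∑ k : Fin N, ∑ l ∈ Ioi k,
          ∑ a : Fin n, ∑ b ∈ Ioi a, ∑ a' : Fin n, ∑ b' ∈ Ioi a',
            m ^ (8 - 2 * ((({i, j} ∩ {k, l} : Finset (Fin N))).card
              * (({a, b} ∩ {a', b'} : Finset (Fin n))).card))) * Z ^ (N * n) := by
    have hsq : ∀ f : Fin N × Fin n → Spin, plaquetteSum N n (e f) ^ 2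
        = ∑ i : Fin N, ∑ j ∈ Ioi i, ∑ k : Fin N, ∑ l ∈ Ioi k,
            ∑ a : Fin n, ∑ b ∈ Ioi a, ∑ a' : Fin n, ∑ b' ∈ Ioi a',
              (∏ c ∈ ({i, j} ×ˢ {a, b} : Finset (Fin N × Fin n)), spinVal (f c))
              * (∏ c ∈ ({k, l} ×ˢ {a', b'} : Finset (Fin N × Fin n)), spinVal (f c)) := by
      intro f
      rw [sq, hP f, mul_expand]
      refine Finset.sum_congr rfl fun i _ => Finset.sum_congr rfl fun j _ =>
        Finset.sum_congr rfl fun k _ => Finset.sum_congr rfl fun l _ => ?_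
      exact mul_expand (fun a => Ioi a) _ _
    calc ∑ f : Fin N × Fin n → Spin, gibbsWeight h N n (e f) * plaquetteSum N n (e f) ^ 2
        = ∑ i : Fin N, ∑ j ∈ Ioi i, ∑ k : Fin N, ∑ l ∈ Ioi k,
            ∑ a : Fin n, ∑ b ∈ Ioi a, ∑ a' : Fin n, ∑ b' ∈ Ioi a',
            ∑ f : Fin N × Fin n → Spin,
              (∏ c : Fin N × Fin n, Real.exp (h * spinVal (f c)))
              * ((∏ c ∈ ({i, j} ×ˢ {a, b} : Finset (Fin N × Fin n)), spinVal (f c))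
                * (∏ c ∈ ({k, l} ×ˢ {a', b'} : Finset (Fin N × Fin n)), spinVal (f c))) := by
          rw [Finset.sum_congr rfl fun f _ => by rw [hW f, hsq f]]
          simp only [Finset.mul_sum]
          rw [Finset.sum_comm]
          refine Finset.sum_congr rfl fun i _ => ?_
          rw [Finset.sum_comm]
          refine Finset.sum_congr rfl fun j _ => ?_
          rw [Finset.sum_comm]
          refine Finset.sum_congr rfl fun k _ => ?_
          rw [Finset.sum_comm]
          refine Finset.sum_congr rfl fun l _ => ?_
          rw [Finset.sum_comm]
          refine Finset.sum_congr rfl fun a _ => ?_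
          rw [Finset.sum_comm]
          refine Finset.sum_congr rfl fun b _ => ?_
          rw [Finset.sum_comm]
          refine Finset.sum_congr rfl fun a' _ => ?_
          rw [Finset.sum_comm]
      _ = ∑ i : Fin N, ∑ j ∈ Ioi i, ∑ k : Fin N, ∑ l ∈ Ioi k,
            ∑ a : Fin n, ∑ b ∈ Ioi a, ∑ a' : Fin n, ∑ b' ∈ Ioi a',
            (m ^ (8 - 2 * ((({i, j} ∩ {k, l} : Finset (Fin N))).card
              * (({a, b} ∩ {a', b'} : Finset (Fin n))).card)) * Z ^ (N * n)) := by
          refine Finset.sum_congr rfl fun i _ => Finset.sum_congr rfl fun j hj =>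
            Finset.sum_congr rfl fun k _ => Finset.sum_congr rfl fun l hl =>
            Finset.sum_congr rfl fun a _ => Finset.sum_congr rfl fun b hb =>
            Finset.sum_congr rfl fun a' _ => Finset.sum_congr rfl fun b' hb' => ?_
          rw [Finset.sum_congr rfl fun f _ => by
            rw [prod_sd f ({i, j} ×ˢ {a, b}) ({k, l} ×ˢ {a', b'})]]
          rw [moment h _, hcard, ← hZdef,
            hpow _ (le_trans (Finset.card_le_univ _)
              (le_of_eq hcard)),
            card_D (ne_of_lt (Finset.mem_Ioi.1 hj)) (ne_of_lt (Finset.mem_Ioi.1 hl))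
              (ne_of_lt (Finset.mem_Ioi.1 hb)) (ne_of_lt (Finset.mem_Ioi.1 hb'))]
      _ = _ := by
          simp only [← Finset.sum_mul]
  rw [hnum, hden, mul_div_assoc, div_self (pow_ne_zero _ (ne_of_gt hZpos)), mul_one]
  -- now pure counting
  have hinner : ∀ (i j k l : Fin N),
      ∑ a : Fin n, ∑ b ∈ Ioi a, ∑ a' : Fin n, ∑ b' ∈ Ioi a',
        m ^ (8 - 2 * ((({i, j} ∩ {k, l} : Finset (Fin N))).card
          * (({a, b} ∩ {a', b'} : Finset (Fin n))).card))
      = (fun r : ℕ => ((n:ℝ)*((n:ℝ)-1)/2)^2 * m ^ (8 - 2 * (r * 0))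
          + (n:ℝ)*((n:ℝ)-1)^2 * (m ^ (8 - 2 * (r * 1)) - m ^ (8 - 2 * (r * 0)))
          + ((n:ℝ)*((n:ℝ)-1)/2) * (m ^ (8 - 2 * (r * 2)) - 2 * m ^ (8 - 2 * (r * 1))
            + m ^ (8 - 2 * (r * 0))))
        ((({i, j} ∩ {k, l} : Finset (Fin N))).card) := by
    intro i j k l
    exact count n (fun c => m ^ (8 - 2 * ((({i, j} ∩ {k, l} : Finset (Fin N))).card * c)))
  rw [Finset.sum_congr rfl fun i _ => Finset.sum_congr rfl fun j _ =>
    Finset.sum_congr rfl fun k _ => Finset.sum_congr rfl fun l _ => hinner i j k l]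
  rw [count N (fun r : ℕ => ((n:ℝ)*((n:ℝ)-1)/2)^2 * m ^ (8 - 2 * (r * 0))
      + (n:ℝ)*((n:ℝ)-1)^2 * (m ^ (8 - 2 * (r * 1)) - m ^ (8 - 2 * (r * 0)))
      + ((n:ℝ)*((n:ℝ)-1)/2) * (m ^ (8 - 2 * (r * 2)) - 2 * m ^ (8 - 2 * (r * 1))
        + m ^ (8 - 2 * (r * 0))))]
  norm_num
  ring
end
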